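/- Let G be a cricket-free graph containing an induced K_{2,3} with sides X (of size 2) and Y (of size 3). Then every vertex a ∉ X ∪ Y adjacent to some vertex of X and some vertex of Y is adjacent to at least two vertices of Y. -/
import Mathlib


/-- The cricket `T(1,1,2)`: a triangle `0, 1, 2` together with two further vertices
`3, 4`, non-adjacent to each other, both adjacent only to `0`. -/
def cricketGraph : SimpleGraph (Fin 5) :=
  SimpleGraph.fromRel fun i j =>
    ((i : ℕ), (j : ℕ)) ∈ [(0, 1), (0, 2), (1, 2), (0, 3), (0, 4)]

/-- In a cricket-free graph containing an induced `K_{2,3}` with sides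
`X 0, X 1` and `Y 0, Y 1, Y 2`, every vertex `a` outside the `K_{2,3}` adjacent to
some vertex of `X` and some vertex of `Y` is adjacent to at least two vertices of `Y`. -/
theorem cricket_free_K23_neighbors {V : Type*} [DecidableEq V] (G : SimpleGraph V)
    [DecidableRel G.Adj]
    (hfree : IsEmpty (cricketGraph ↪g G))
    (X : Fin 2 → V) (Y : Fin 3 → V)
    (hXinj : Function.Injective X) (hYinj : Function.Injective Y)
    (hXY : ∀ i j, X i ≠ Y j)
    (hXindep : ∀ i j, i ≠ j → ¬ G.Adj (X i) (X j))
    (hYindep : ∀ i j, i ≠ j → ¬ G.Adj (Y i) (Y j))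
    (hcomplete : ∀ i j, G.Adj (X i) (Y j))
    (a : V) (haX : a ∉ Set.range X) (haY : a ∉ Set.range Y)
    (haXadj : ∃ i, G.Adj a (X i)) (haYadj : ∃ j, G.Adj a (Y j)) :
    2 ≤ (Finset.univ.filter fun j : Fin 3 => G.Adj a (Y j)).card := by
  by_contra h
  push_neg at h
  obtain ⟨i, hi⟩ := haXadj
  obtain ⟨j, hj⟩ := haYadj
  have honly : ∀ k, G.Adj a (Y k) → k = j := by
    intro k hk
    by_contra hkj
    have hsub : ({k, j} : Finset (Fin 3)) ⊆
        Finset.univ.filter fun m => G.Adj a (Y m) := by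
      intro x hx
      simp only [Finset.mem_insert, Finset.mem_singleton] at hx
      rcases hx with rfl | rfl <;> simp [hk, hj]
    have hc := Finset.card_le_card hsub
    rw [Finset.card_insert_of_notMem (by simpa using hkj), Finset.card_singleton] at hc
    omega
  have hnot : ∀ k, k ≠ j → ¬ G.Adj a (Y k) := fun k hk hadj => hk (honly k hadj)
  have hnot' : ∀ k, k ≠ j → ¬ G.Adj (Y k) a := fun k hk hadj => hnot k hk hadj.symm
  have haXne : ∀ m, a ≠ X m := fun m hm => haX ⟨m, hm.symm⟩
  have haYne : ∀ m, a ≠ Y m := fun m hm => haY ⟨m, hm.symm⟩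
  have hYne : ∀ m k : Fin 3, m ≠ k → Y m ≠ Y k := fun m k hmk he => hmk (hYinj he)
  have hFin : ∀ m : Fin 3, m + 1 ≠ m ∧ m + 2 ≠ m ∧ m + 1 ≠ m + 2 := by decide
  have h1j : j + 1 ≠ j := (hFin j).1
  have h2j : j + 2 ≠ j := (hFin j).2.1
  have h12 : j + 1 ≠ j + 2 := (hFin j).2.2
  let f : Fin 5 → V := ![X i, a, Y j, Y (j + 1), Y (j + 2)]
  have hinj : Function.Injective f := by
    intro u v huv
    fin_cases u <;> fin_cases v <;> simp only [f] at huv <;>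
      first
        | rfl
        | (exact absurd huv (by
            simp [hXY, haXne, haYne, hYne, (haXne i).symm, (haYne j).symm,
              fun k => (haYne k).symm, fun k => (hXY i k).symm,
              h1j, h2j, h12, h1j.symm, h2j.symm, h12.symm]))
  have hiff : ∀ u v, G.Adj (f u) (f v) ↔ cricketGraph.Adj u v := by
    intro u v
    fin_cases u <;> fin_cases v <;>
      simp [f, cricketGraph, SimpleGraph.fromRel_adj, hi, hi.symm, hj, hj.symm,
        hcomplete, fun k => (hcomplete i k).symm, hnot _ h1j, hnot _ h2j,
        hYindep _ _ h1j, hYindep _ _ h2j, hYindep _ _ h12,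
        hYindep _ _ h1j.symm, hYindep _ _ h2j.symm, hYindep _ _ h12.symm,
        hnot' _ h1j, hnot' _ h2j,
        haXne, haYne, hXY, hYne _ _ h1j, hYne _ _ h2j, hYne _ _ h12] <;>
      decide
  exact hfree.elim ⟨⟨f, hinj⟩, hiff _ _⟩
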